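/- Let θ, h, m : ℝ → ℝ be functions with θ and h differentiable and m differentiable, and suppose that for every s ∈ ℝ one has cos θ(s) ≠ 0, m'(s) = tan θ(s)·h(s)·m(s), and h'(s) = −tan θ(s)·h(s)·(θ'(s) + h(s)). Then m is twice differentiable and satisfies sin θ(s)·m''(s) = θ'(s)·cos θ(s)·m'(s) for every s ∈ ℝ. -/

import Mathlib

/-- Let `θ, h, m : ℝ → ℝ` be differentiable functions such that for every
`s ∈ ℝ` one has `cos (θ s) ≠ 0`, `m' s = tan (θ s) * h s * m s` and
`h' s = -tan (θ s) * h s * (θ' s + h s)`. Then `m` is twice differentiable and satisfies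
`sin (θ s) * m'' s = θ' s * cos (θ s) * m' s` for every `s ∈ ℝ`. -/
theorem stmt_0 (θ h m : ℝ → ℝ)
    (hθ : Differentiable ℝ θ) (hh : Differentiable ℝ h) (hm : Differentiable ℝ m)
    (hcos : ∀ s, Real.cos (θ s) ≠ 0)
    (hm' : ∀ s, deriv m s = Real.tan (θ s) * h s * m s)
    (hh' : ∀ s, deriv h s = -Real.tan (θ s) * h s * (deriv θ s + h s)) :
    Differentiable ℝ (deriv m) ∧
      ∀ s, Real.sin (θ s) * deriv (deriv m) s
        = deriv θ s * Real.cos (θ s) * deriv m s := by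
  have ht : ∀ s, DifferentiableAt ℝ (fun s => Real.tan (θ s)) s := fun s =>
    (Real.differentiableAt_tan.mpr (hcos s)).comp s (hθ s)
  have hg : Differentiable ℝ (fun s => Real.tan (θ s) * h s * m s) :=
    fun s => ((ht s).mul (hh s)).mul (hm s)
  have heq : deriv m = fun s => Real.tan (θ s) * h s * m s := funext hm'
  refine ⟨heq ▸ hg, fun s => ?_⟩
  have hdt : deriv (fun s => Real.tan (θ s)) s = deriv θ s / Real.cos (θ s) ^ 2 := by
    have : (fun s => Real.tan (θ s)) = Real.tan ∘ θ := rfl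
    rw [this, deriv_comp (x := s) (Real.differentiableAt_tan.mpr (hcos s)) (hθ s),
      Real.deriv_tan]
    ring
  have hdg : deriv (fun s => Real.tan (θ s) * h s * m s) s
      = (deriv (fun s => Real.tan (θ s)) s * h s + Real.tan (θ s) * deriv h s) * m s
        + Real.tan (θ s) * h s * deriv m s := by
    rw [deriv_fun_mul (c := fun s => Real.tan (θ s) * h s) ((ht s).mul (hh s)) (hm s), deriv_fun_mul (ht s) (hh s)]
  rw [heq, hdg, hdt, hh' s, hm' s]
  have hc := hcos s
  have hsc := Real.sin_sq_add_cos_sq (θ s)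
  simp only [Real.tan_eq_sin_div_cos]
  field_simp
  ring_nf
  linear_combination (-Real.sin (θ s) * deriv θ s * h s * m s) * hsc
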